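/- Under the hypotheses of Proposition 2.1 (U differentiable unitary-valued with U(0)=1 and i·U′(t) = H(t)∘U(t) for continuous self-adjoint-valued H; ψ₁,…,ψ_m orthonormal; ψ_k(t) := U(t)⁻¹ψ_k; Ṽ the solution of i·Ṽ′ = C·Ṽ, Ṽ(0)=1 with C(t)_{pk} = ⟨ψ_p, H(t)ψ_k⟩; ψ̃_k(t) := Σ_p Ṽ(t)_{pk}·ψ_p(t)), one has ⟨ψ_p(t), (d/dt)ψ̃_k(t)⟩ = 0 for all 1 ≤ p, k ≤ m and all t. -/

import Mathlib

open ContinuousLinearMap in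
/-- The adjoint as a real-continuous-linear map on endomorphisms. -/
noncomputable def adjointRCLM (𝓗 : Type*) [NormedAddCommGroup 𝓗] [InnerProductSpace ℂ 𝓗]
    [FiniteDimensional ℂ 𝓗] : (𝓗 →L[ℂ] 𝓗) →L[ℝ] (𝓗 →L[ℂ] 𝓗) where
  toFun := adjoint
  map_add' x y := by simp [map_add]
  map_smul' r x := by
    simp only [RingHom.id_apply]
    have : (r : ℂ) • x = r • x := by
      ext v; simp
    rw [← this, LinearIsometryEquiv.map_smulₛₗ]
    have : (starRingEnd ℂ) (r : ℂ) = (r : ℂ) := by simp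
    rw [this]
    ext v; simp
  cont := (ContinuousLinearMap.adjoint (𝕜 := ℂ) (E := 𝓗) (F := 𝓗)).continuous

open ContinuousLinearMap in
/-- Proposition 2.1: the parallel-transported eigenvectors
`ψ̃_k(t) = Σ_p Ṽ(t)_{pk} · U(t)⁻¹ψ_p` satisfy `⟨ψ_p(t), (d/dt)ψ̃_k(t)⟩ = 0`,
where `ψ_p(t) = U(t)⁻¹ψ_p`. -/
theorem parallel_transport_condition_frame
    {𝓗 : Type*} [NormedAddCommGroup 𝓗] [InnerProductSpace ℂ 𝓗] [FiniteDimensional ℂ 𝓗]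
    (Ham : ℝ → 𝓗 →L[ℂ] 𝓗) (hHcont : Continuous Ham)
    (hHsa : ∀ t, IsSelfAdjoint (Ham t))
    (U U' : ℝ → 𝓗 →L[ℂ] 𝓗)
    (hU0 : U 0 = 1)
    (hUuni : ∀ t, adjoint (U t) ∘L U t = 1 ∧ U t ∘L adjoint (U t) = 1)
    (hUderiv : ∀ t, HasDerivAt U (U' t) t)
    (hSch : ∀ t, Complex.I • U' t = Ham t ∘L U t)
    (m : ℕ) (ψ : Fin m → 𝓗) (hψ : Orthonormal ℂ ψ)
    (C : ℝ → Matrix (Fin m) (Fin m) ℂ)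
    (hC : ∀ t p k, C t p k = (inner ℂ (ψ p) (Ham t (ψ k)) : ℂ))
    (V V' : ℝ → Matrix (Fin m) (Fin m) ℂ)
    (hV0 : V 0 = 1)
    (hVderiv : ∀ t p k, HasDerivAt (fun s => V s p k) (V' t p k) t)
    (hVode : ∀ t, Complex.I • V' t = C t * V t)
    (ψtil : Fin m → ℝ → 𝓗)
    (hψtil : ∀ k t, ψtil k t = ∑ p, V t p k • (adjoint (U t)) (ψ p)) :
    ∀ t, ∀ p k, ∃ v : 𝓗,
      HasDerivAt (ψtil k) v t ∧ (inner ℂ ((adjoint (U t)) (ψ p)) v : ℂ) = 0 := by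
  intro t p k
  -- derivative of s ↦ adjoint (U s) applied to a vector
  have hAdjDeriv : HasDerivAt (fun s => adjointRCLM 𝓗 (U s)) (adjointRCLM 𝓗 (U' t)) t :=
    (adjointRCLM 𝓗).hasFDerivAt.comp_hasDerivAt t (hUderiv t)
  have hAdj : ∀ q : Fin m, HasDerivAt (fun s => (adjoint (U s)) (ψ q))
      ((adjoint (U' t)) (ψ q)) t := by
    intro q
    have := ((ContinuousLinearMap.apply ℂ 𝓗 (ψ q)).restrictScalars ℝ).hasFDerivAt.comp_hasDerivAt
      t hAdjDeriv
    simpa [adjointRCLM, Function.comp_def] using this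
  set v : 𝓗 := ∑ q, (V t q k • (adjoint (U' t)) (ψ q) + V' t q k • (adjoint (U t)) (ψ q)) with hv
  refine ⟨v, ?_, ?_⟩
  · have hfun : ψtil k = fun s => ∑ q, V s q k • (adjoint (U s)) (ψ q) :=
      funext fun s => hψtil k s
    rw [hfun, hv]
    exact HasDerivAt.fun_sum fun q _ => (hVderiv t q k).smul (hAdj q)
  · -- adjoint of U' via Schrödinger equation
    have hadj' : adjoint (U' t) = Complex.I • (adjoint (U t) ∘L Ham t) := by
      have h := congrArg star (hSch t)
      rw [star_smul] at h
      have hmul : Ham t ∘L U t = Ham t * U t := rfl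
      rw [hmul, star_mul] at h
      rw [star_eq_adjoint, star_eq_adjoint] at h
      rw [(hHsa t).star_eq] at h
      -- h : (starRingEnd ℂ) I • adjoint (U' t) = adjoint (U t) * Ham t
      have : adjoint (U' t) = Complex.I • (star Complex.I • adjoint (U' t)) := by
        rw [smul_smul]
        simp [Complex.star_def, Complex.conj_I]
      rw [this, h]
      rfl
    have horth : ∀ x y : 𝓗,
        (inner ℂ ((adjoint (U t)) x) ((adjoint (U t)) y) : ℂ) = inner ℂ x y := by
      intro x y
      rw [adjoint_inner_right]
      have : U t ((adjoint (U t)) x) = x := by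
        have := congrArg (fun A => A x) (hUuni t).2
        simpa using this
      rw [this]
    have hinU' : ∀ x q : Fin m → Fin m, True := fun _ _ => trivial
    have hC' : ∀ q : Fin m,
        (inner ℂ ((adjoint (U t)) (ψ p)) ((adjoint (U' t)) (ψ q)) : ℂ)
          = Complex.I * C t p q := by
      intro q
      rw [hadj']
      have : (Complex.I • (adjoint (U t) ∘L Ham t)) (ψ q)
          = Complex.I • (adjoint (U t)) (Ham t (ψ q)) := rfl
      rw [this, inner_smul_right, horth, hC]
    have hortho : ∀ q : Fin m, (inner ℂ (ψ p) (ψ q) : ℂ) = if p = q then 1 else 0 :=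
      fun q => orthonormal_iff_ite.mp hψ p q
    rw [hv, inner_sum]
    have hterm : ∀ q : Fin m,
        (inner ℂ ((adjoint (U t)) (ψ p))
          (V t q k • (adjoint (U' t)) (ψ q) + V' t q k • (adjoint (U t)) (ψ q)) : ℂ)
        = V t q k * (Complex.I * C t p q) + V' t q k * (if p = q then 1 else 0) := by
      intro q
      rw [inner_add_right, inner_smul_right, inner_smul_right, horth, hortho, hC' q]
    rw [Finset.sum_congr rfl fun q _ => hterm q]
    rw [Finset.sum_add_distrib]
    have h1 : ∑ q, V' t q k * (if p = q then 1 else 0) = V' t p k := by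
      simp [Finset.sum_ite_eq]
    have h2 : ∑ q, V t q k * (Complex.I * C t p q)
        = Complex.I * ∑ q, C t p q * V t q k := by
      rw [Finset.mul_sum]; congr 1; ext q; ring
    rw [add_comm] at *
    rw [h1, h2]
    have h3 : ∑ q, C t p q * V t q k = Complex.I * V' t p k := by
      have := congrArg (fun M => M p k) (hVode t)
      simp only [Matrix.smul_apply, Matrix.mul_apply, smul_eq_mul] at this
      rw [← this]
    rw [h3]
    have : Complex.I * (Complex.I * V' t p k) = -V' t p k := by
      rw [← mul_assoc, Complex.I_mul_I]; ring
    rw [this]; ring
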